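/- arXiv:1604.01657 — 6 statements merged into one kernel-verified Lean document; each statement's English description precedes it below -/
import Mathlib

section
/- Let u^(1),…,u^(p) be p linearly independent vectors in R^p each of norm at most one, and let w ∈ R^p be a nonzero vector. Then there exist a constant C_p > 0 depending only on p and an index i ∈ {1,…,p} such that |⟨u^(i), w⟩| ≥ C_p · |w| · |det(u^(1),…,u^(p))|. -/
set_option maxHeartbeats 2000000 in
theorem pairing_lower_bound (p : ℕ) :
    ∃ C : ℝ, 0 < C ∧
      ∀ u : Fin p → EuclideanSpace ℝ (Fin p),
        LinearIndependent ℝ u →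
        (∀ i, ‖u i‖ ≤ 1) →
        ∀ w : EuclideanSpace ℝ (Fin p), w ≠ 0 →
          ∃ i : Fin p,
            C * ‖w‖ * |(Matrix.of fun i j : Fin p => u j i).det| ≤
              |(inner ℝ (u i) w : ℝ)| := by
  classical
  refine ⟨1 / (((p : ℝ)^2 + 1) * ((Nat.factorial p : ℕ) : ℝ)), by positivity, ?_⟩
  intro u hu hnorm w hw
  have hp : 0 < p := by
    rcases Nat.eq_zero_or_pos p with h | h
    · subst h
      exact absurd (Subsingleton.elim w 0) hw
    · exact h
  haveI : Nonempty (Fin p) := ⟨⟨0, hp⟩⟩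
  set A : Matrix (Fin p) (Fin p) ℝ := Matrix.of (fun i j => u i j) with hA
  -- entries are bounded by 1
  have hent : ∀ i j, |A i j| ≤ 1 := by
    intro i j
    have h1 : |u i j| ≤ ‖u i‖ := by
      rw [EuclideanSpace.norm_eq]
      have h2 : ‖u i j‖ ^ 2 ≤ ∑ k, ‖u i k‖ ^ 2 :=
        Finset.single_le_sum (f := fun k => ‖u i k‖ ^ 2)
          (fun k _ => by positivity) (Finset.mem_univ j)
      calc |u i j| = Real.sqrt (‖u i j‖ ^ 2) := by
            rw [Real.sqrt_sq (norm_nonneg _)]; simp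
        _ ≤ _ := Real.sqrt_le_sqrt h2
    exact h1.trans (hnorm i)
  -- determinant is nonzero
  have hlin : LinearIndependent ℝ (fun i => A i) :=
    hu.map' (WithLp.linearEquiv 2 ℝ (Fin p → ℝ)).toLinearMap
      (LinearEquiv.ker _)
  have hdet : A.det ≠ 0 := by
    have hA' := Matrix.linearIndependent_rows_iff_isUnit.mp hlin
    exact ((Matrix.isUnit_iff_isUnit_det A).mp hA').ne_zero
  set v : Fin p → ℝ := fun i => inner ℝ (u i) w with hv
  have hAv : A.mulVec (fun j => w j) = v := by
    funext i
    simp [Matrix.mulVec, dotProduct, hv, PiLp.inner_apply, RCLike.inner_apply, hA, mul_comm]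
  have hkey : A.det • (fun j => w j) = (Matrix.adjugate A).mulVec v := by
    rw [← hAv, Matrix.mulVec_mulVec, Matrix.adjugate_mul, Matrix.smul_mulVec,
      Matrix.one_mulVec]
  -- adjugate entries bounded by p!
  have hadj : ∀ i j, |(Matrix.adjugate A) i j| ≤ ((Nat.factorial p : ℕ) : ℝ) := by
    intro i j
    rw [Matrix.adjugate_apply]
    have hb : ∀ k l, |(A.updateRow j (Pi.single i 1)) k l| ≤ (1 : ℝ) := by
      intro k l
      by_cases hk : k = j
      · subst hk
        rw [Matrix.updateRow_self]
        by_cases hl : l = i <;> simp [Pi.single_apply, hl]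
      · rw [Matrix.updateRow_ne hk]; exact hent k l
    have := Matrix.det_le (A := A.updateRow j (Pi.single i 1))
      (abv := AbsoluteValue.abs) (x := (1 : ℝ)) hb
    simpa using this
  -- pick the maximizing index
  obtain ⟨i₀, -, hmax⟩ := Finset.exists_max_image Finset.univ (fun i => |v i|)
    ⟨Classical.arbitrary (Fin p), Finset.mem_univ _⟩
  refine ⟨i₀, ?_⟩
  have hmax' : ∀ i, |v i| ≤ |v i₀| := fun i => hmax i (Finset.mem_univ i)
  -- coordinatewise bound
  have hcoord : ∀ j, |A.det| * |w j| ≤ (p : ℝ) * ((Nat.factorial p : ℕ) : ℝ) * |v i₀| := by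
    intro j
    have h1 : A.det * w j = ∑ i, (Matrix.adjugate A) j i * v i := by
      have := congrFun hkey j
      simpa [Matrix.mulVec, dotProduct] using this
    calc |A.det| * |w j| = |A.det * w j| := (abs_mul _ _).symm
      _ = |∑ i, (Matrix.adjugate A) j i * v i| := by rw [h1]
      _ ≤ ∑ i, |(Matrix.adjugate A) j i * v i| := Finset.abs_sum_le_sum_abs _ _
      _ ≤ ∑ _i : Fin p, ((Nat.factorial p : ℕ) : ℝ) * |v i₀| := by
          refine Finset.sum_le_sum fun i _ => ?_
          rw [abs_mul]
          exact mul_le_mul (hadj j i) (hmax' i) (abs_nonneg _)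
            (by positivity)
      _ = (p : ℝ) * ((Nat.factorial p : ℕ) : ℝ) * |v i₀| := by
          rw [Finset.sum_const, Finset.card_univ, Fintype.card_fin, nsmul_eq_mul]; ring
  -- norm bound: euclidean norm ≤ l1 norm
  have hnormw : ‖w‖ ≤ ∑ j, |w j| := by
    rw [EuclideanSpace.norm_eq]
    have h2 : ∑ j, ‖w j‖ ^ 2 ≤ (∑ j, ‖w j‖) ^ 2 :=
      Finset.sum_sq_le_sq_sum_of_nonneg fun j _ => norm_nonneg _
    calc Real.sqrt (∑ j, ‖w j‖ ^ 2) ≤ Real.sqrt ((∑ j, ‖w j‖) ^ 2) :=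
          Real.sqrt_le_sqrt h2
      _ = ∑ j, ‖w j‖ := Real.sqrt_sq (Finset.sum_nonneg fun j _ => norm_nonneg _)
      _ = ∑ j, |w j| := by simp
  -- combine
  have hcomb : |A.det| * ‖w‖ ≤ (p : ℝ)^2 * ((Nat.factorial p : ℕ) : ℝ) * |v i₀| := by
    calc |A.det| * ‖w‖ ≤ |A.det| * ∑ j, |w j| :=
          mul_le_mul_of_nonneg_left hnormw (abs_nonneg _)
      _ = ∑ j, |A.det| * |w j| := Finset.mul_sum _ _ _
      _ ≤ ∑ _j : Fin p, (p : ℝ) * ((Nat.factorial p : ℕ) : ℝ) * |v i₀| := Finset.sum_le_sum fun j _ => hcoord j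
      _ = (p : ℝ)^2 * ((Nat.factorial p : ℕ) : ℝ) * |v i₀| := by
          rw [Finset.sum_const, Finset.card_univ, Fintype.card_fin, nsmul_eq_mul]; ring
  have hdetM : (Matrix.of fun i j : Fin p => u j i).det = A.det := by
    rw [← Matrix.det_transpose]
    congr 1
  rw [hdetM]
  have hC : ((p : ℝ)^2 + 1) * ((Nat.factorial p : ℕ) : ℝ) > 0 := by positivity
  have hfac : (0:ℝ) < ((Nat.factorial p : ℕ) : ℝ) := by positivity
  rw [div_mul_eq_mul_div, div_mul_eq_mul_div, div_le_iff₀ hC]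
  have hvnn : (0:ℝ) ≤ |v i₀| := abs_nonneg _
  calc 1 * ‖w‖ * |A.det| = |A.det| * ‖w‖ := by ring
    _ ≤ (p : ℝ)^2 * ((Nat.factorial p : ℕ) : ℝ) * |v i₀| := hcomb
    _ ≤ |v i₀| * (((p : ℝ)^2 + 1) * ((Nat.factorial p : ℕ) : ℝ)) := by nlinarith
end

section
/- Let a_1,…,a_p ∈ Z^d be vectors with pairwise distinct Euclidean norms, all contained in the ball of radius N ≥ 1, and let m ∈ [1,2]. Then the absolute value of the p×p determinant D whose (j,l) entry is d^j ω_{a_l}/dm^j (where ω_a(m) = sqrt(|a|^4+m)) satisfies |D| ≥ C N^{−3p^2 + p} for a constant C > 0 depending only on p. -/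
noncomputable def dcoef (n : ℕ) : ℝ := ∏ i ∈ Finset.range n, ((1:ℝ)/2 - i)

lemma dcoef_ne_zero (n : ℕ) : dcoef n ≠ 0 := by
  unfold dcoef
  rw [Finset.prod_ne_zero_iff]
  intro i _
  intro h
  have h2 : (2:ℝ) * i = 1 := by linarith
  have h3 : ((2*i : ℕ) : ℝ) = 1 := by push_cast; linarith
  have : 2*i = 1 := by exact_mod_cast h3
  omega

lemma iter_sqrt (n : ℕ) (b : ℝ) : ∀ m : ℝ, 0 < b + m →
    iteratedDeriv n (fun t => Real.sqrt (b + t)) m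
      = dcoef n * (b + m) ^ ((1:ℝ)/2 - n) := by
  induction n with
  | zero =>
    intro m hm
    simp [dcoef, Real.sqrt_eq_rpow]
  | succ n ih =>
    intro m hm
    rw [iteratedDeriv_succ]
    have hopen : IsOpen {t : ℝ | 0 < b + t} :=
      isOpen_lt continuous_const (continuous_const.add continuous_id)
    have hev : iteratedDeriv n (fun t => Real.sqrt (b + t)) =ᶠ[nhds m]
        fun t => dcoef n * (b + t) ^ ((1:ℝ)/2 - n) := by
      filter_upwards [hopen.mem_nhds hm] with t ht using ih t ht
    rw [hev.deriv_eq]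
    have h1 : HasDerivAt (fun t : ℝ => b + t) 1 m := by
      simpa using (hasDerivAt_id m).const_add b
    have h2 : HasDerivAt (fun y : ℝ => y ^ ((1:ℝ)/2 - n))
        (((1:ℝ)/2 - n) * (b+m) ^ ((1:ℝ)/2 - (n:ℝ) - 1)) (b + m) :=
      Real.hasDerivAt_rpow_const (Or.inl (ne_of_gt hm))
    have h3 : HasDerivAt (fun t : ℝ => (b + t) ^ ((1:ℝ)/2 - n))
        (((1:ℝ)/2 - n) * (b+m) ^ ((1:ℝ)/2 - (n:ℝ) - 1) * 1) m := h2.comp m h1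
    have h4 := (h3.const_mul (dcoef n)).deriv
    rw [h4]
    have he : (1:ℝ)/2 - (n:ℝ) - 1 = 1/2 - ((n+1 : ℕ):ℝ) := by push_cast; ring
    rw [he]
    have hc : dcoef (n+1) = dcoef n * ((1:ℝ)/2 - n) := Finset.prod_range_succ _ n
    rw [hc]
    ring

lemma pair_bound (N u w m : ℝ) (hN : 1 ≤ N) (hm1 : 1 ≤ m) (hm2 : m ≤ 2)
    (hw0 : 0 ≤ w) (huw : w + 1 ≤ u) (huN : u ≤ N^2) (hwN : w ≤ N^2) :
    (9 * N^6)⁻¹ ≤ (w^2+m)⁻¹ - (u^2+m)⁻¹ := by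
  have hu1 : 1 ≤ u := by linarith
  have hN0 : (0:ℝ) < N := by linarith
  have hN4 : (1:ℝ) ≤ N^4 := one_le_pow₀ hN
  have hd1 : (0:ℝ) < w^2 + m := by nlinarith
  have hd2 : (0:ℝ) < u^2 + m := by nlinarith
  have key : (w^2+m)⁻¹ - (u^2+m)⁻¹ = (u^2 - w^2) / ((w^2+m) * (u^2+m)) := by
    field_simp
    ring
  rw [key]
  have hw2 : w^2 ≤ N^4 := by nlinarith [mul_le_mul hwN hwN hw0 (by positivity : (0:ℝ) ≤ N^2)]
  have ha : w^2 + m ≤ 3*N^4 := by nlinarith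
  have hb : u^2 + m ≤ 3*u^2 := by nlinarith
  have hden : (w^2+m) * (u^2+m) ≤ 9 * N^4 * u^2 := by
    nlinarith [mul_le_mul ha hb (le_of_lt hd2) (by positivity : (0:ℝ) ≤ 3*N^4)]
  have step1 : u / (9 * N^4 * u^2) ≤ (u^2 - w^2) / ((w^2+m) * (u^2+m)) := by
    apply div_le_div₀ (by nlinarith) (by nlinarith) (by positivity) hden
  have step2 : (9 * N^6)⁻¹ ≤ u / (9 * N^4 * u^2) := by
    have hne : u ≠ 0 := by linarith
    rw [show u / (9*N^4*u^2) = 1/(9*N^4*u) by field_simp, inv_eq_one_div]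
    apply div_le_div₀ zero_le_one le_rfl (by positivity)
    nlinarith [mul_le_mul_of_nonneg_left huN (show (0:ℝ) ≤ 9*N^4 by positivity)]
  linarith

lemma count_pairs (p : ℕ) :
    2 * (∑ i : Fin p, (Finset.Ioi i).card) = p * (p - 1) := by
  have h0 : (∑ i : Fin p, (Finset.Ioi i).card) = ∑ i ∈ Finset.range p, (p - 1 - i) := by
    simp only [Fin.card_Ioi]
    exact Fin.sum_univ_eq_sum_range (fun i => p - 1 - i) p
  have t1 : ∑ i ∈ Finset.range p, (p - 1 - i) = ∑ i ∈ Finset.range p, i :=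
    Finset.sum_range_reflect (fun j => j) p
  rw [h0, two_mul]
  nth_rewrite 2 [t1]
  rw [← Finset.sum_add_distrib]
  have : ∑ i ∈ Finset.range p, (p - 1 - i + i) = ∑ _i ∈ Finset.range p, (p-1) := by
    apply Finset.sum_congr rfl
    intro i hi
    have := Finset.mem_range.mp hi
    omega
  rw [this, Finset.sum_const, Finset.card_range, smul_eq_mul]

/-- Euclidean norm of an integer vector in `ℤ^d`. -/
noncomputable def znorm {d : ℕ} (a : Fin d → ℤ) : ℝ :=
  Real.sqrt (∑ i, ((a i : ℝ)) ^ 2)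

theorem derivative_determinant_lower_bound (p : ℕ) (hp : 1 ≤ p) :
    ∃ C : ℝ, 0 < C ∧
      ∀ (d : ℕ) (N : ℝ), 1 ≤ N →
        ∀ a : Fin p → Fin d → ℤ,
          (∀ j k, j ≠ k → znorm (a j) ≠ znorm (a k)) →
          (∀ j, znorm (a j) ≤ N) →
          ∀ m ∈ Set.Icc (1 : ℝ) 2,
            C * N ^ (-3 * (p : ℤ) ^ 2 + (p : ℤ)) ≤
              |(Matrix.of fun j l : Fin p =>
                  iteratedDeriv (j.1 + 1)
                    (fun t : ℝ => Real.sqrt (znorm (a l) ^ 4 + t)) m).det| := by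
  refine ⟨(∏ j : Fin p, |dcoef ((j:ℕ)+1)|) * ((3:ℝ)⁻¹)^p
      * ((9:ℝ)⁻¹)^(∑ i : Fin p, (Finset.Ioi i).card), ?_, ?_⟩
  · have h1 : 0 < ∏ j : Fin p, |dcoef ((j:ℕ)+1)| :=
      Finset.prod_pos fun j _ => abs_pos.mpr (dcoef_ne_zero _)
    positivity
  intro d N hN a hdist hle m hm
  obtain ⟨hm1, hm2⟩ := hm
  have hN0 : (0:ℝ) < N := by linarith
  set T := ∑ i : Fin p, (Finset.Ioi i).card with hTdef
  set S : Fin p → ℤ := fun l => ∑ i, (a l i)^2 with hS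
  set e : Fin p → ℝ := fun l => ((S l : ℤ) : ℝ) with he
  have he0 : ∀ l, 0 ≤ e l := by
    intro l
    have : (0:ℤ) ≤ S l := Finset.sum_nonneg fun i _ => sq_nonneg _
    simp only [he]
    exact_mod_cast this
  have hzn : ∀ l, znorm (a l) = Real.sqrt (e l) := by
    intro l
    unfold znorm
    congr 1
    simp only [he, hS]
    push_cast
    ring
  have hb : ∀ l, znorm (a l)^4 = (e l)^2 := by
    intro l
    rw [hzn l, show (4:ℕ) = 2*2 from rfl, pow_mul, Real.sq_sqrt (he0 l)]
  have heN : ∀ l, e l ≤ N^2 := by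
    intro l
    have h := hle l
    rw [hzn l] at h
    nlinarith [Real.sq_sqrt (he0 l), Real.sqrt_nonneg (e l)]
  have hSne : ∀ i j : Fin p, i ≠ j → S i ≠ S j := by
    intro i j hij hSeq
    exact hdist i j hij (by rw [hzn i, hzn j, he]; simp [hSeq])
  have hpos : ∀ l, (0:ℝ) < e l^2 + m := by
    intro l
    nlinarith [he0 l]
  set x : Fin p → ℝ := fun l => (e l^2 + m)⁻¹ with hx
  set s : Fin p → ℝ := fun l => (e l^2 + m) ^ (-(1/2) : ℝ) with hsdef
  -- rewrite the matrix
  have hM : (Matrix.of fun j l : Fin p =>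
        iteratedDeriv ((j:ℕ)+1) (fun t : ℝ => Real.sqrt (znorm (a l)^4 + t)) m)
      = Matrix.of (fun j l : Fin p => dcoef ((j:ℕ)+1) * (s l * x l ^ (j:ℕ))) := by
    ext j l
    simp only [Matrix.of_apply]
    rw [hb l, iter_sqrt ((j:ℕ)+1) (e l^2) m (hpos l)]
    congr 1
    simp only [hsdef, hx]
    rw [show (1:ℝ)/2 - (((j:ℕ)+1 : ℕ):ℝ) = (-(1/2)) + (-((j:ℕ):ℝ)) by push_cast; ring]
    rw [Real.rpow_add (hpos l), Real.rpow_neg (le_of_lt (hpos l)) ((j:ℕ):ℝ),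
      Real.rpow_natCast, ← inv_pow]
  rw [hM]
  have hdet1 := Matrix.det_mul_column (fun j : Fin p => dcoef ((j:ℕ)+1))
    (Matrix.of fun j l : Fin p => s l * x l ^ (j:ℕ))
  simp only [Matrix.of_apply] at hdet1
  have hdet2 := Matrix.det_mul_row s (Matrix.of fun j l : Fin p => x l ^ (j:ℕ))
  simp only [Matrix.of_apply] at hdet2
  have hvt : (Matrix.of fun j l : Fin p => x l ^ (j:ℕ)) = (Matrix.vandermonde x).transpose := by
    ext j l
    simp [Matrix.vandermonde]
  rw [hdet1, hdet2, hvt, Matrix.det_transpose, Matrix.det_vandermonde]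
  -- bounds
  have hsl' : ∀ l, 0 < s l := fun l => Real.rpow_pos_of_pos (hpos l) _
  have hsl : ∀ l : Fin p, (3*N^2)⁻¹ ≤ s l := by
    intro l
    have hb1 : e l^2 + m ≤ 9*N^4 := by
      have h1 : e l^2 ≤ N^4 := by nlinarith [heN l, he0 l]
      have h2 : (1:ℝ) ≤ N^4 := one_le_pow₀ hN
      nlinarith
    have h2 : (9*N^4 : ℝ)^(-(1/2):ℝ) ≤ (e l^2+m)^(-(1/2):ℝ) :=
      Real.rpow_le_rpow_of_nonpos (hpos l) hb1 (by norm_num)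
    have h3 : (9*N^4 : ℝ)^(-(1/2):ℝ) = (3*N^2)⁻¹ := by
      rw [show (9*N^4 : ℝ) = (3*N^2)^2 by ring, ← Real.rpow_natCast (3*N^2) 2,
        ← Real.rpow_mul (by positivity)]
      norm_num [Real.rpow_neg_one, mul_inv]
    rw [← h3]
    exact h2
  have hpair : ∀ i j : Fin p, i < j → (9*N^6)⁻¹ ≤ |x j - x i| := by
    intro i j hij
    have hxx : ∀ l : Fin p, x l = (e l^2 + m)⁻¹ := fun l => by rw [hx]
    rcases lt_or_gt_of_ne (hSne i j (ne_of_lt hij)) with h | h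
    · have hcast : e i + 1 ≤ e j := by
        have : S i + 1 ≤ S j := h
        simp only [he]
        exact_mod_cast this
      have hpb := pair_bound N (e j) (e i) m hN hm1 hm2 (he0 i) hcast (heN j) (heN i)
      rw [hxx i, hxx j] at *
      rw [abs_sub_comm, abs_of_nonneg (by nlinarith [hpb, (by positivity : (0:ℝ) < (9*N^6)⁻¹)])]
      linarith
    · have hcast : e j + 1 ≤ e i := by
        have : S j + 1 ≤ S i := h
        simp only [he]
        exact_mod_cast this
      have hpb := pair_bound N (e i) (e j) m hN hm1 hm2 (he0 j) hcast (heN i) (heN j)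
      rw [hxx i, hxx j]
      rw [abs_of_nonneg (by nlinarith [hpb, (by positivity : (0:ℝ) < (9*N^6)⁻¹)])]
      linarith
  -- absolute value of the product
  rw [abs_mul, abs_mul]
  have habs1 : |∏ j : Fin p, dcoef ((j:ℕ)+1)| = ∏ j : Fin p, |dcoef ((j:ℕ)+1)| :=
    Finset.abs_prod _ _
  have habs2 : |∏ l, s l| = ∏ l, s l := abs_of_pos (Finset.prod_pos fun l _ => hsl' l)
  have habs3 : |∏ i : Fin p, ∏ j ∈ Finset.Ioi i, (x j - x i)|
      = ∏ i : Fin p, ∏ j ∈ Finset.Ioi i, |x j - x i| := by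
    rw [Finset.abs_prod]
    exact Finset.prod_congr rfl fun i _ => Finset.abs_prod _ _
  rw [habs1, habs2, habs3]
  -- product lower bounds
  have hs2 : ((3*N^2)⁻¹)^p ≤ ∏ l, s l := by
    calc ((3*N^2)⁻¹)^p = ∏ _l : Fin p, (3*N^2)⁻¹ := by
          rw [Finset.prod_const, Finset.card_univ, Fintype.card_fin]
      _ ≤ ∏ l, s l := Finset.prod_le_prod (fun _ _ => by positivity) (fun l _ => hsl l)
  have hP : ((9*N^6)⁻¹)^T ≤ ∏ i : Fin p, ∏ j ∈ Finset.Ioi i, |x j - x i| := by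
    calc ((9*N^6)⁻¹)^T = ∏ i : Fin p, ((9*N^6)⁻¹)^(Finset.Ioi i).card := by
          rw [Finset.prod_pow_eq_pow_sum, hTdef]
      _ ≤ ∏ i : Fin p, ∏ j ∈ Finset.Ioi i, |x j - x i| := by
          apply Finset.prod_le_prod (fun i _ => by positivity)
          intro i _
          rw [← Finset.prod_const]
          exact Finset.prod_le_prod (fun j _ => by positivity)
            (fun j hj => hpair i j (Finset.mem_Ioi.mp hj))
  -- exponent bookkeeping
  have hcount := count_pairs p
  have hc : (2*(T:ℤ)) = (p:ℤ) * ((p:ℤ) - 1) := by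
    have h1 : (2*T : ℕ) = p*(p-1) := by rw [hTdef]; exact count_pairs p
    have h2 : ((2*T:ℕ):ℤ) = ((p*(p-1):ℕ):ℤ) := by exact_mod_cast h1
    push_cast [Nat.cast_sub hp] at h2
    linarith
  have hz : (N : ℝ) ^ (-3 * (p:ℤ)^2 + p) = ((N^(2*p+6*T) : ℝ))⁻¹ := by
    rw [show (-3*(p:ℤ)^2 + p) = -((2*p+6*T : ℕ):ℤ) by push_cast; linear_combination (3:ℤ)*hc]
    rw [zpow_neg, zpow_natCast]
  have hsplit : ((3*N^2)⁻¹)^p * ((9*N^6)⁻¹)^T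
      = ((3:ℝ)⁻¹)^p * ((9:ℝ)⁻¹)^T * ((N:ℝ)^(2*p+6*T))⁻¹ := by
    rw [pow_add, pow_mul, pow_mul]
    rw [mul_inv, mul_inv, mul_pow, mul_pow, inv_pow, inv_pow, inv_pow, inv_pow, mul_inv]
    ring
  calc (∏ j : Fin p, |dcoef ((j:ℕ)+1)|) * 3⁻¹ ^ p * 9⁻¹ ^ T * N ^ (-3 * (p:ℤ)^2 + p)
      = (∏ j : Fin p, |dcoef ((j:ℕ)+1)|) * (((3*N^2)⁻¹)^p * ((9*N^6)⁻¹)^T) := by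
        rw [hz, hsplit]
        ring
    _ ≤ (∏ j : Fin p, |dcoef ((j:ℕ)+1)|) *
        ((∏ l, s l) * ∏ i : Fin p, ∏ j ∈ Finset.Ioi i, |x j - x i|) := by
        apply mul_le_mul_of_nonneg_left _ (Finset.prod_nonneg fun j _ => abs_nonneg _)
        exact mul_le_mul hs2 hP (by positivity) (le_of_lt (Finset.prod_pos fun l _ => hsl' l))
    _ = (∏ j : Fin p, |dcoef ((j:ℕ)+1)|) * ((∏ l, s l) *
        ∏ i : Fin p, ∏ j ∈ Finset.Ioi i, |x j - x i|) := rfl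
end

section
/- Let γ = (γ_1, γ_2) with γ_1 ≥ 0 and γ_2 − ϰ ≥ 0 (ϰ ≥ 0). Define the weight e_{γ,ϰ}(a,b) = C e^{γ_1 [a−b]} max([a−b],1)^{γ_2} min(⟨a⟩,⟨b⟩)^ϰ on Z^d × Z^d. Then for C sufficiently large (depending only on γ_2 and ϰ), e_{γ,ϰ}(a,b) ≤ e_{γ,0}(a,c) · e_{γ,ϰ}(c,b) for all a, b, c ∈ Z^d. -/
/-- The pseudo-metric `[a-b] = min(|a-b|, |a+b|)` on `ℤ^d`. -/
noncomputable def pd {d : ℕ} (a b : Fin d → ℤ) : ℝ :=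
  min (znorm (a - b)) (znorm (a + b))

/-- The weight `e_{γ,ϰ}(a,b) = C e^{γ₁[a-b]} max([a-b],1)^{γ₂} min(⟨a⟩,⟨b⟩)^ϰ`. -/
noncomputable def wt {d : ℕ} (C γ1 γ2 ϰ : ℝ) (a b : Fin d → ℤ) : ℝ :=
  C * Real.exp (γ1 * pd a b) * max (pd a b) 1 ^ γ2 *
    min (max 1 (znorm a)) (max 1 (znorm b)) ^ ϰ

lemma znorm_eq_norm {d : ℕ} (a : Fin d → ℤ) :
    znorm a = ‖(WithLp.equiv 2 (Fin d → ℝ)).symm (fun i => (a i : ℝ))‖ := by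
  rw [EuclideanSpace.norm_eq]
  simp [znorm, sq_abs]

lemma znorm_nonneg {d : ℕ} (a : Fin d → ℤ) : 0 ≤ znorm a := Real.sqrt_nonneg _

lemma znorm_neg {d : ℕ} (a : Fin d → ℤ) : znorm (-a) = znorm a := by
  simp [znorm]

lemma znorm_add_le {d : ℕ} (a b : Fin d → ℤ) : znorm (a + b) ≤ znorm a + znorm b := by
  rw [znorm_eq_norm, znorm_eq_norm, znorm_eq_norm]
  have h1 : (fun i => ((a + b) i : ℝ)) =
      (fun i => (a i : ℝ)) + (fun i => (b i : ℝ)) := by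
    funext i; simp [Pi.add_apply]
  rw [h1]
  have h2 : (WithLp.equiv 2 (Fin d → ℝ)).symm ((fun i => (a i : ℝ)) + (fun i => (b i : ℝ))) =
      (WithLp.equiv 2 (Fin d → ℝ)).symm (fun i => (a i : ℝ)) +
      (WithLp.equiv 2 (Fin d → ℝ)).symm (fun i => (b i : ℝ)) := by
    exact (WithLp.equiv 2 (Fin d → ℝ)).symm_apply_eq.mpr (by simp)
  rw [h2]
  exact norm_add_le _ _

lemma pd_nonneg {d : ℕ} (a b : Fin d → ℤ) : 0 ≤ pd a b :=
  le_min (znorm_nonneg _) (znorm_nonneg _)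

lemma pd_symm {d : ℕ} (a b : Fin d → ℤ) : pd a b = pd b a := by
  unfold pd
  rw [show a - b = -(b - a) by ring, znorm_neg, add_comm]

lemma pd_triangle {d : ℕ} (a b c : Fin d → ℤ) : pd a b ≤ pd a c + pd c b := by
  have t1 : znorm (a - b) ≤ znorm (a - c) + znorm (c - b) := by
    rw [show a - b = (a - c) + (c - b) by ring]; exact znorm_add_le _ _
  have t2 : znorm (a - b) ≤ znorm (a + c) + znorm (c + b) := by
    rw [show a - b = (a + c) + (-(c + b)) by ring]
    exact le_trans (znorm_add_le _ _) (by rw [znorm_neg])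
  have t3 : znorm (a + b) ≤ znorm (a - c) + znorm (c + b) := by
    rw [show a + b = (a - c) + (c + b) by ring]; exact znorm_add_le _ _
  have t4 : znorm (a + b) ≤ znorm (a + c) + znorm (c - b) := by
    rw [show a + b = (a + c) + (-(c - b)) by ring]
    exact le_trans (znorm_add_le _ _) (by rw [znorm_neg])
  unfold pd
  rcases le_total (znorm (a - c)) (znorm (a + c)) with h | h <;>
    rcases le_total (znorm (c - b)) (znorm (c + b)) with h' | h'
  · rw [min_eq_left h, min_eq_left h']; exact min_le_of_left_le t1
  · rw [min_eq_left h, min_eq_right h']; exact min_le_of_right_le t3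
  · rw [min_eq_right h, min_eq_left h']; exact min_le_of_right_le t4
  · rw [min_eq_right h, min_eq_right h']; exact min_le_of_left_le t2

lemma znorm_le_pd {d : ℕ} (a c : Fin d → ℤ) : znorm a ≤ znorm c + pd a c := by
  have t1 : znorm a ≤ znorm c + znorm (a - c) := by
    calc znorm a = znorm (c + (a - c)) := by rw [show c + (a - c) = a by ring]
      _ ≤ znorm c + znorm (a - c) := znorm_add_le _ _
  have t2 : znorm a ≤ znorm c + znorm (a + c) := by
    calc znorm a = znorm ((a + c) + (-c)) := by rw [show (a + c) + (-c) = a by ring]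
      _ ≤ znorm (a + c) + znorm (-c) := znorm_add_le _ _
      _ = znorm c + znorm (a + c) := by rw [znorm_neg]; ring
  unfold pd
  rcases le_total (znorm (a - c)) (znorm (a + c)) with h | h
  · rw [min_eq_left h]; exact t1
  · rw [min_eq_right h]; exact t2

/-- ⟨a⟩ ≤ ⟨c⟩ + [a-c] -/
lemma gauge_le {d : ℕ} (a c : Fin d → ℤ) :
    max 1 (znorm a) ≤ max 1 (znorm c) + pd a c := by
  apply max_le
  · linarith [le_max_left 1 (znorm c), pd_nonneg a c]
  · calc znorm a ≤ znorm c + pd a c := znorm_le_pd a c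
      _ ≤ max 1 (znorm c) + pd a c := by gcongr; exact le_max_right _ _

lemma key_ineq (γ2 ϰ : ℝ) (hϰ : 0 ≤ ϰ) (hγ : ϰ ≤ γ2) (P X Y M m : ℝ)
    (hX : 1 ≤ X) (hY : 1 ≤ Y) (hm : 1 ≤ m) (hM : 0 ≤ M) (hP : 0 ≤ P)
    (h1 : P ≤ 2 * Y) (h2 : M ≤ 2 * X * m) :
    P ^ γ2 * M ^ ϰ ≤ 2 ^ (γ2 + ϰ) * (X ^ γ2 * Y ^ γ2 * m ^ ϰ) := by
  have hγ2 : 0 ≤ γ2 := hϰ.trans hγ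
  have hXp : (0:ℝ) ≤ X := by linarith
  have hYp : (0:ℝ) ≤ Y := by linarith
  have hmp : (0:ℝ) ≤ m := by linarith
  have c1 : P ^ γ2 ≤ (2 * Y) ^ γ2 := Real.rpow_le_rpow hP h1 hγ2
  have c2 : M ^ ϰ ≤ (2 * X * m) ^ ϰ := Real.rpow_le_rpow hM h2 hϰ
  have e1 : (2 * Y) ^ γ2 = 2 ^ γ2 * Y ^ γ2 := Real.mul_rpow (by norm_num) hYp
  have e2 : (2 * X * m) ^ ϰ = 2 ^ ϰ * X ^ ϰ * m ^ ϰ := by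
    rw [Real.mul_rpow (by positivity) hmp, Real.mul_rpow (by norm_num) hXp]
  have c3 : X ^ ϰ ≤ X ^ γ2 := Real.rpow_le_rpow_of_exponent_le hX hγ
  have e3 : (2:ℝ) ^ (γ2 + ϰ) = 2 ^ γ2 * 2 ^ ϰ := Real.rpow_add (by norm_num) _ _
  calc P ^ γ2 * M ^ ϰ ≤ (2 * Y) ^ γ2 * (2 * X * m) ^ ϰ := by
        apply mul_le_mul c1 c2 (Real.rpow_nonneg hM ϰ) (by positivity)
    _ = 2 ^ γ2 * 2 ^ ϰ * (X ^ ϰ * Y ^ γ2 * m ^ ϰ) := by rw [e1, e2]; ring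
    _ ≤ 2 ^ γ2 * 2 ^ ϰ * (X ^ γ2 * Y ^ γ2 * m ^ ϰ) := by
        have : X ^ ϰ * Y ^ γ2 * m ^ ϰ ≤ X ^ γ2 * Y ^ γ2 * m ^ ϰ := by
          apply mul_le_mul_of_nonneg_right _ (Real.rpow_nonneg hmp ϰ)
          exact mul_le_mul_of_nonneg_right c3 (Real.rpow_nonneg hYp γ2)
        apply mul_le_mul_of_nonneg_left this (by positivity)
    _ = 2 ^ (γ2 + ϰ) * (X ^ γ2 * Y ^ γ2 * m ^ ϰ) := by rw [e3]

theorem weight_submultiplicative (γ2 ϰ : ℝ) (hϰ : 0 ≤ ϰ) (hγ2 : 0 ≤ γ2 - ϰ) :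
    ∃ C0 : ℝ, 0 < C0 ∧
      ∀ C : ℝ, C0 ≤ C →
        ∀ (d : ℕ) (γ1 : ℝ), 0 ≤ γ1 →
          ∀ a b c : Fin d → ℤ,
            wt C γ1 γ2 ϰ a b ≤ wt C γ1 γ2 0 a c * wt C γ1 γ2 ϰ c b := by
  have hγ : ϰ ≤ γ2 := by linarith
  have hγ2' : 0 ≤ γ2 := hϰ.trans hγ
  refine ⟨2 ^ (γ2 + ϰ), by positivity, ?_⟩
  intro C hC d γ1 hγ1 a b c
  have hCpos : 0 < C := lt_of_lt_of_le (by positivity) hC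
  unfold wt
  rw [Real.rpow_zero, mul_one]
  set pab := pd a b
  set pac := pd a c
  set pcb := pd c b
  set Pab := max pab 1 with hPab
  set Pac := max pac 1 with hPac
  set Pcb := max pcb 1 with hPcb
  set A := max 1 (znorm a)
  set B := max 1 (znorm b)
  set Cg := max 1 (znorm c)
  set M := min A B
  set m := min Cg B
  have hA1 : (1:ℝ) ≤ A := le_max_left _ _
  have hB1 : (1:ℝ) ≤ B := le_max_left _ _
  have hC1 : (1:ℝ) ≤ Cg := le_max_left _ _
  have hm1 : (1:ℝ) ≤ m := le_min hC1 hB1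
  have hM0 : (0:ℝ) ≤ M := le_trans zero_le_one (le_min hA1 hB1)
  have hPab1 : (1:ℝ) ≤ Pab := le_max_right _ _
  have hPac1 : (1:ℝ) ≤ Pac := le_max_right _ _
  have hPcb1 : (1:ℝ) ≤ Pcb := le_max_right _ _
  have hpac0 : (0:ℝ) ≤ pac := pd_nonneg a c
  have hpcb0 : (0:ℝ) ≤ pcb := pd_nonneg c b
  have htri : pab ≤ pac + pcb := pd_triangle a b c
  have hE : Real.exp (γ1 * pab) ≤ Real.exp (γ1 * pac) * Real.exp (γ1 * pcb) := by
    rw [← Real.exp_add]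
    apply Real.exp_le_exp.mpr
    rw [← mul_add]
    exact mul_le_mul_of_nonneg_left htri hγ1
  -- key polynomial bound
  have K : Pab ^ γ2 * M ^ ϰ ≤ 2 ^ (γ2 + ϰ) * (Pac ^ γ2 * Pcb ^ γ2 * m ^ ϰ) := by
    rcases le_total pac pcb with hc | hc
    · -- Pab ≤ 2 Pcb, M ≤ 2 Pac m
      have h1 : Pab ≤ 2 * Pcb := by
        rw [hPab, hPcb]
        apply max_le
        · calc pab ≤ pac + pcb := htri
            _ ≤ 2 * pcb := by linarith
            _ ≤ 2 * max pcb 1 := by gcongr; exact le_max_left _ _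
        · linarith [le_max_right pcb 1]
      have h2 : M ≤ 2 * Pac * m := by
        have hAc : A ≤ Cg + pac := gauge_le a c
        have hM : M ≤ m + pac := by
          rcases le_total Cg B with h | h
          · rw [show m = Cg from min_eq_left h]
            calc M ≤ A := min_le_left _ _
              _ ≤ Cg + pac := hAc
          · rw [show m = B from min_eq_right h]
            have : M ≤ B := min_le_right _ _
            linarith
        have hm2 : m + pac ≤ 2 * Pac * m := by
          have : pac ≤ Pac := le_max_left _ _
          nlinarith [le_max_right pac 1]
        linarith
      exact key_ineq γ2 ϰ hϰ hγ Pab Pac Pcb M m hPac1 hPcb1 hm1 hM0 (by linarith) h1 h2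
    · -- Pab ≤ 2 Pac, M ≤ 2 Pcb m
      have h1 : Pab ≤ 2 * Pac := by
        rw [hPab, hPac]
        apply max_le
        · calc pab ≤ pac + pcb := htri
            _ ≤ 2 * pac := by linarith
            _ ≤ 2 * max pac 1 := by gcongr; exact le_max_left _ _
        · linarith [le_max_right pac 1]
      have h2 : M ≤ 2 * Pcb * m := by
        have hBc : B ≤ Cg + pcb := by
          have := gauge_le b c
          rwa [pd_symm b c] at this
        have hb1 : B ≤ 2 * Pcb * Cg := by
          have h3 : pcb ≤ Pcb := le_max_left _ _
          nlinarith [le_max_right pcb 1]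
        have hb2 : B ≤ 2 * Pcb * B := by nlinarith [le_max_right pcb 1]
        have hBm : B ≤ 2 * Pcb * m := by
          rcases le_total Cg B with h | h
          · rw [show m = Cg from min_eq_left h]; exact hb1
          · rw [show m = B from min_eq_right h]; exact hb2
        exact le_trans (min_le_right _ _) hBm
      have := key_ineq γ2 ϰ hϰ hγ Pab Pcb Pac M m hPcb1 hPac1 hm1 hM0 (by linarith) h1 h2
      calc Pab ^ γ2 * M ^ ϰ ≤ 2 ^ (γ2 + ϰ) * (Pcb ^ γ2 * Pac ^ γ2 * m ^ ϰ) := this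
        _ = 2 ^ (γ2 + ϰ) * (Pac ^ γ2 * Pcb ^ γ2 * m ^ ϰ) := by ring
  -- assemble
  have hnn : (0:ℝ) ≤ Pac ^ γ2 * Pcb ^ γ2 * m ^ ϰ := by positivity
  calc C * Real.exp (γ1 * pab) * Pab ^ γ2 * M ^ ϰ
      = C * Real.exp (γ1 * pab) * (Pab ^ γ2 * M ^ ϰ) := by ring
    _ ≤ C * (Real.exp (γ1 * pac) * Real.exp (γ1 * pcb)) *
        (2 ^ (γ2 + ϰ) * (Pac ^ γ2 * Pcb ^ γ2 * m ^ ϰ)) := by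
        apply mul_le_mul
        · exact mul_le_mul_of_nonneg_left hE (le_of_lt hCpos)
        · exact K
        · positivity
        · positivity
    _ ≤ C * (Real.exp (γ1 * pac) * Real.exp (γ1 * pcb)) *
        (C * (Pac ^ γ2 * Pcb ^ γ2 * m ^ ϰ)) := by
        apply mul_le_mul_of_nonneg_left _ (by positivity)
        exact mul_le_mul_of_nonneg_right hC hnn
    _ = C * Real.exp (γ1 * pac) * Pac ^ γ2 * (C * Real.exp (γ1 * pcb) * Pcb ^ γ2 * m ^ ϰ) := by
        ring
end

section
/- Let γ ≥ 0, −γ ≤ γ̃ ≤ γ (componentwise in R^2), and ϰ ≥ 0. Then for C sufficiently large (depending only on γ_2, ϰ), the weights satisfy e_{γ̃,ϰ}(a,0) ≤ e_{γ,ϰ}(a,b) · e_{γ̃,ϰ}(b,0) for all a, b ∈ Z^d. -/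
lemma znorm_zero {d : ℕ} : znorm (0 : Fin d → ℤ) = 0 := by
  simp [znorm]

lemma pd_zero {d : ℕ} (a : Fin d → ℤ) : pd a 0 = znorm a := by
  simp [pd]

/-- Key estimate: `|‖a‖ - ‖b‖| ≤ [a-b]`. -/
lemma abs_znorm_sub_le_pd {d : ℕ} (a b : Fin d → ℤ) :
    |znorm a - znorm b| ≤ pd a b := by
  set x : EuclideanSpace ℝ (Fin d) := (WithLp.equiv 2 (Fin d → ℝ)).symm (fun i => (a i : ℝ)) with hx
  set y : EuclideanSpace ℝ (Fin d) := (WithLp.equiv 2 (Fin d → ℝ)).symm (fun i => (b i : ℝ)) with hy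
  have hax : znorm a = ‖x‖ := znorm_eq_norm a
  have hby : znorm b = ‖y‖ := znorm_eq_norm b
  have hsub : znorm (a - b) = ‖x - y‖ := by
    rw [znorm_eq_norm]
    congr 1
    ext i
    show ((a i - b i : ℤ) : ℝ) = x i - y i
    rw [hx, hy]
    push_cast
    rfl
  have hadd : znorm (a + b) = ‖x + y‖ := by
    rw [znorm_eq_norm]
    congr 1
    ext i
    show ((a i + b i : ℤ) : ℝ) = x i + y i
    rw [hx, hy]
    push_cast
    rfl
  have h1 : |‖x‖ - ‖y‖| ≤ ‖x - y‖ := abs_norm_sub_norm_le x y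
  have h2 : |‖x‖ - ‖y‖| ≤ ‖x + y‖ := by
    have := abs_norm_sub_norm_le x (-y)
    simpa [sub_neg_eq_add] using this
  rw [hax, hby, pd, hsub, hadd]
  exact le_min h1 h2

/-- Comparison of powers of comparable bases. -/
lemma rpow_compare (p A B t g : ℝ) (hp : 1 ≤ p) (hA : 1 ≤ A) (hB : 1 ≤ B)
    (hg1 : -g ≤ t) (hg2 : t ≤ g) (hAB : A ≤ 2 * p * B) (hBA : B ≤ 2 * p * A) :
    A ^ t ≤ (2 * p) ^ g * B ^ t := by
  have hA0 : (0:ℝ) ≤ A := by linarith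
  have hB0 : (0:ℝ) ≤ B := by linarith
  have h2p : (1:ℝ) ≤ 2 * p := by linarith
  have h2p0 : (0:ℝ) ≤ 2 * p := by linarith
  rcases le_or_gt 0 t with ht | ht
  · calc A ^ t ≤ (2 * p * B) ^ t := Real.rpow_le_rpow hA0 hAB ht
      _ = (2 * p) ^ t * B ^ t := Real.mul_rpow h2p0 hB0
      _ ≤ (2 * p) ^ g * B ^ t :=
          mul_le_mul_of_nonneg_right (Real.rpow_le_rpow_of_exponent_le h2p hg2)
            (Real.rpow_nonneg hB0 t)
  · have hs : 0 ≤ -t := by linarith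
    have hBs : B ^ (-t) ≤ (2 * p) ^ g * A ^ (-t) :=
      calc B ^ (-t) ≤ (2 * p * A) ^ (-t) := Real.rpow_le_rpow hB0 hBA hs
        _ = (2 * p) ^ (-t) * A ^ (-t) := Real.mul_rpow h2p0 hA0
        _ ≤ (2 * p) ^ g * A ^ (-t) :=
            mul_le_mul_of_nonneg_right
              (Real.rpow_le_rpow_of_exponent_le h2p (by linarith))
              (Real.rpow_nonneg hA0 _)
  -- rewrite with inverses
    have hApos : (0:ℝ) < A ^ (-t) := Real.rpow_pos_of_pos (by linarith) _
    have hBpos : (0:ℝ) < B ^ (-t) := Real.rpow_pos_of_pos (by linarith) _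
    have hAe : A ^ t = 1 / A ^ (-t) := by
      rw [Real.rpow_neg hA0 t, one_div, inv_inv]
    have hBe : B ^ t = 1 / B ^ (-t) := by
      rw [Real.rpow_neg hB0 t, one_div, inv_inv]
    rw [hAe, hBe, mul_one_div]
    rw [div_le_div_iff₀ hApos hBpos]
    nlinarith [hBs]

theorem weight_comparison (γ2 ϰ : ℝ) (hϰ : 0 ≤ ϰ) :
    ∃ C0 : ℝ, 0 < C0 ∧
      ∀ C : ℝ, C0 ≤ C →
        ∀ (d : ℕ) (γ1 γt1 γt2 : ℝ), 0 ≤ γ1 → 0 ≤ γ2 →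
          -γ1 ≤ γt1 → γt1 ≤ γ1 → -γ2 ≤ γt2 → γt2 ≤ γ2 →
          ∀ a b : Fin d → ℤ,
            wt C γt1 γt2 ϰ a 0 ≤ wt C γ1 γ2 ϰ a b * wt C γt1 γt2 ϰ b 0 := by
  refine ⟨(2:ℝ) ^ γ2, Real.rpow_pos_of_pos (by norm_num) _, ?_⟩
  intro C hC d γ1 γt1 γt2 hγ1 hγ2 ht1l ht1u ht2l ht2u a b
  have hCpos : 0 < C := lt_of_lt_of_le (Real.rpow_pos_of_pos (by norm_num) _) hC
  -- unfold the weights first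
  have hwa0 : wt C γt1 γt2 ϰ a 0
      = C * Real.exp (γt1 * znorm a) * max (znorm a) 1 ^ γt2 := by
    rw [wt, pd_zero, znorm_zero]
    have : min (max 1 (znorm a)) (max (1:ℝ) 0) = 1 := by
      rw [max_eq_left (by norm_num : (0:ℝ) ≤ 1)]
      exact min_eq_right (le_max_left _ _)
    rw [this, Real.one_rpow, mul_one]
  have hwb0 : wt C γt1 γt2 ϰ b 0
      = C * Real.exp (γt1 * znorm b) * max (znorm b) 1 ^ γt2 := by
    rw [wt, pd_zero, znorm_zero]
    have : min (max 1 (znorm b)) (max (1:ℝ) 0) = 1 := by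
      rw [max_eq_left (by norm_num : (0:ℝ) ≤ 1)]
      exact min_eq_right (le_max_left _ _)
    rw [this, Real.one_rpow, mul_one]
  rw [hwa0, hwb0, wt]
  -- notation
  set na := znorm a with hna
  set nb := znorm b with hnb
  set q := pd a b with hq
  set p := max q 1 with hp
  set A := max na 1 with hA
  set B := max nb 1 with hB
  set M := min (max 1 na) (max 1 nb) with hM
  have hq0 : 0 ≤ q := pd_nonneg a b
  have hkey : |na - nb| ≤ q := abs_znorm_sub_le_pd a b
  have hab : na - nb ≤ q := (abs_le.mp hkey).2
  have hba : nb - na ≤ q := by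
    have := (abs_le.mp hkey).1; linarith
  have hna0 : 0 ≤ na := znorm_nonneg a
  have hnb0 : 0 ≤ nb := znorm_nonneg b
  have hp1 : (1:ℝ) ≤ p := le_max_right _ _
  have hA1 : (1:ℝ) ≤ A := le_max_right _ _
  have hB1 : (1:ℝ) ≤ B := le_max_right _ _
  have hqp : q ≤ p := le_max_left _ _
  have hnaA : na ≤ A := le_max_left _ _
  have hnbB : nb ≤ B := le_max_left _ _
  have hAB : A ≤ 2 * p * B := by
    have h1 : na ≤ B + p := by linarith
    have h2 : A ≤ B + p := max_le (by linarith) (by linarith)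
    nlinarith
  have hBA : B ≤ 2 * p * A := by
    have h1 : nb ≤ A + p := by linarith
    have h2 : B ≤ A + p := max_le (by linarith) (by linarith)
    nlinarith
  -- exponential part
  have habs1 : |γt1| ≤ γ1 := abs_le.mpr ⟨by linarith, ht1u⟩
  have hexp_lin : γt1 * na ≤ γ1 * q + γt1 * nb := by
    have h1 : γt1 * (na - nb) ≤ |γt1| * |na - nb| := by
      calc γt1 * (na - nb) ≤ |γt1 * (na - nb)| := le_abs_self _
        _ = |γt1| * |na - nb| := abs_mul _ _
    have h2 : |γt1| * |na - nb| ≤ γ1 * q :=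
      mul_le_mul habs1 hkey (abs_nonneg _) hγ1
    nlinarith
  have hexp : Real.exp (γt1 * na) ≤ Real.exp (γ1 * q) * Real.exp (γt1 * nb) := by
    rw [← Real.exp_add]
    exact Real.exp_le_exp.mpr hexp_lin
  -- power part
  have hpow : A ^ γt2 ≤ (2 * p) ^ γ2 * B ^ γt2 :=
    rpow_compare p A B γt2 γ2 hp1 hA1 hB1 ht2l ht2u hAB hBA
  have hpow' : A ^ γt2 ≤ (2:ℝ) ^ γ2 * p ^ γ2 * B ^ γt2 := by
    rw [Real.mul_rpow (by norm_num) (by linarith : (0:ℝ) ≤ p)] at hpow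
    linarith [hpow]
  -- positivity facts
  have hPpos : (0:ℝ) < p ^ γ2 := Real.rpow_pos_of_pos (by linarith) _
  have hApos : (0:ℝ) < A ^ γt2 := Real.rpow_pos_of_pos (by linarith) _
  have hBpos : (0:ℝ) < B ^ γt2 := Real.rpow_pos_of_pos (by linarith) _
  have hM1 : (1:ℝ) ≤ M := le_min (le_max_left _ _) (le_max_left _ _)
  have hMpos : (0:ℝ) < M := by linarith
  have hMk : (1:ℝ) ≤ M ^ ϰ := by
    calc (1:ℝ) = M ^ (0:ℝ) := (Real.rpow_zero M).symm
      _ ≤ M ^ ϰ := Real.rpow_le_rpow_of_exponent_le hM1 hϰ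
  have hMk0 : (0:ℝ) < M ^ ϰ := by linarith
  -- final computation
  have hC2 : C * (2:ℝ) ^ γ2 ≤ C * C :=
    mul_le_mul_of_nonneg_left hC (le_of_lt hCpos)
  calc C * Real.exp (γt1 * na) * A ^ γt2
      ≤ C * ((Real.exp (γ1 * q) * Real.exp (γt1 * nb)) *
          ((2:ℝ) ^ γ2 * p ^ γ2 * B ^ γt2)) := by
        rw [mul_assoc]
        refine mul_le_mul_of_nonneg_left ?_ (le_of_lt hCpos)
        exact mul_le_mul hexp hpow' (le_of_lt hApos) (by positivity)
    _ = (C * (2:ℝ) ^ γ2) *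
          (Real.exp (γ1 * q) * p ^ γ2 * (Real.exp (γt1 * nb) * B ^ γt2)) := by
        ring
    _ ≤ (C * C) *
          (Real.exp (γ1 * q) * p ^ γ2 * (Real.exp (γt1 * nb) * B ^ γt2)) := by
        refine mul_le_mul_of_nonneg_right hC2 ?_
        positivity
    _ = (C * Real.exp (γ1 * q) * p ^ γ2 * 1) *
          (C * Real.exp (γt1 * nb) * B ^ γt2) := by ring
    _ ≤ C * Real.exp (γ1 * q) * p ^ γ2 * M ^ ϰ *
          (C * Real.exp (γt1 * nb) * B ^ γt2) := by
        refine mul_le_mul_of_nonneg_right ?_ (by positivity)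
        refine mul_le_mul_of_nonneg_left hMk ?_
        positivity
end

section
/- Let I ⊂ R be an open interval and f: I → R a C^j function with |f^{(j)}(x)| ≥ δ > 0 for all x ∈ I. Then for every ε > 0, the Lebesgue measure of {x ∈ I : |f(x)| < ε} is at most C (ε/δ)^{1/j}, where C depends only on the C^j norm of f on I (and on the length of I). -/
open MeasureTheory Set

lemma myIteratedDerivWithin_isOpen {f : ℝ → ℝ} {s : Set ℝ} (n : ℕ) (hs : IsOpen s) {x : ℝ}
    (hx : x ∈ s) : iteratedDerivWithin n f s x = iteratedDeriv n f x := by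
  rw [iteratedDerivWithin, iteratedDeriv, iteratedFDerivWithin_of_isOpen n hs hx]

lemma my_mvt_bound (a b : ℝ) (h h' : ℝ → ℝ) (lam eta : ℝ) (hlam : 0 < lam)
    (hdiff : ∀ x ∈ Set.Ioo a b, HasDerivAt h (h' x) x)
    (hlb : ∀ x ∈ Set.Ioo a b, lam ≤ |h' x|) :
    volume {x ∈ Set.Ioo a b | |h x| < eta} ≤ ENNReal.ofReal (2 * (eta / lam)) := by
  have key : ∀ x ∈ {x ∈ Set.Ioo a b | |h x| < eta}, ∀ y ∈ {x ∈ Set.Ioo a b | |h x| < eta},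
      x < y → y - x ≤ 2 * (eta / lam) := by
    rintro x ⟨hx, hhx⟩ y ⟨hy, hhy⟩ hxy
    have hIcc : Set.Icc x y ⊆ Set.Ioo a b := fun z hz =>
      ⟨lt_of_lt_of_le hx.1 hz.1, lt_of_le_of_lt hz.2 hy.2⟩
    have hIoo : Set.Ioo x y ⊆ Set.Ioo a b := subset_trans Set.Ioo_subset_Icc_self hIcc
    have hcont : ContinuousOn h (Set.Icc x y) := fun z hz =>
      ((hdiff z (hIcc hz)).continuousAt).continuousWithinAt
    obtain ⟨c, hc, hceq⟩ := exists_hasDerivAt_eq_slope h h' hxy hcont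
      (fun z hz => hdiff z (hIoo hz))
    have h1 : lam * (y - x) ≤ |h y - h x| := by
      have : |h y - h x| = |h' c| * (y - x) := by
        rw [hceq, abs_div, abs_of_pos (by linarith : (0:ℝ) < y - x),
          div_mul_cancel₀ _ (by linarith : y - x ≠ 0)]
      rw [this]
      exact mul_le_mul_of_nonneg_right (hlb c (hIoo hc)) (by linarith)
    have h2 : |h y - h x| < 2 * eta := by
      calc |h y - h x| ≤ |h y| + |h x| := abs_sub _ _
        _ < 2 * eta := by linarith
    rw [mul_comm 2 (eta/lam), div_mul_eq_mul_div, le_div_iff₀ hlam]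
    nlinarith
  refine (Real.volume_le_diam _).trans ?_
  refine EMetric.diam_le fun x hx y hy => ?_
  rw [edist_dist, Real.dist_eq]
  refine ENNReal.ofReal_le_ofReal ?_
  rcases lt_trichotomy x y with hlt | heq | hgt
  · rw [abs_of_nonpos (by linarith)]
    have := key x hx y hy hlt; linarith
  · simp [heq]
    have : (0:ℝ) < eta := lt_of_le_of_lt (abs_nonneg _) hx.2
    positivity
  · rw [abs_of_nonneg (by linarith)]
    have := key y hy x hx hgt; linarith

lemma my_key : ∀ m : ℕ, 1 ≤ m → ∀ (a b : ℝ) (g : ℝ → ℝ) (lam eta : ℝ), 0 < lam → 0 < eta →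
    ContDiffOn ℝ m g (Set.Ioo a b) →
    (∀ x ∈ Set.Ioo a b, lam ≤ |iteratedDeriv m g x|) →
    volume {x ∈ Set.Ioo a b | |g x| < eta} ≤
      ENNReal.ofReal ((2 ^ (m+1) - 2) * (eta / lam) ^ ((1:ℝ)/m)) := by
  intro m hm
  induction m, hm using Nat.le_induction with
  | base =>
    intro a b g lam eta hlam heta hg hlb
    have hb : ((2:ℝ) ^ (1+1) - 2) * (eta / lam) ^ ((1:ℝ)/(1:ℕ)) = 2 * (eta/lam) := by
      norm_num
    rw [hb]
    refine my_mvt_bound a b g (iteratedDeriv 1 g) lam eta hlam ?_ hlb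
    intro x hx
    have hd : DifferentiableAt ℝ g x :=
      ((hg.differentiableOn (by simp)) x hx).differentiableAt
        (isOpen_Ioo.mem_nhds hx)
    simpa [iteratedDeriv_one] using hd.hasDerivAt
  | succ m hm ih =>
    intro a b g lam eta hlam heta hg hlb
    have hs : IsOpen (Set.Ioo a b) := isOpen_Ioo
    have hu : UniqueDiffOn ℝ (Set.Ioo a b) := hs.uniqueDiffOn
    set t : ℝ := (eta / lam) ^ ((1:ℝ)/((m:ℝ)+1)) with htdef
    have hql : 0 < eta / lam := div_pos heta hlam
    have ht : 0 < t := Real.rpow_pos_of_pos hql _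
    have htpow : t ^ ((m:ℝ)+1) = eta / lam := by
      rw [htdef, ← Real.rpow_mul hql.le,
        one_div_mul_cancel (by positivity : ((m:ℝ)+1) ≠ 0), Real.rpow_one]
    have hmne : ((m:ℝ)) ≠ 0 := by
      have : 1 ≤ m := hm; positivity
    set s : ℝ := lam * t with hsdef
    have hspos : 0 < s := mul_pos hlam ht
    have hetas : eta / s = t ^ (m:ℝ) := by
      rw [hsdef, div_mul_eq_div_div, ← htpow, Real.rpow_add ht, Real.rpow_one,
        mul_div_cancel_right₀ _ (ne_of_gt ht)]
    have hetast : (eta / s) ^ ((1:ℝ)/(m:ℝ)) = t := by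
      rw [hetas, ← Real.rpow_mul ht.le, mul_one_div_cancel hmne, Real.rpow_one]
    set h : ℝ → ℝ := iteratedDeriv m g with hhdef
    -- derivative of h
    have hder : ∀ x ∈ Set.Ioo a b, HasDerivAt h (iteratedDeriv (m+1) g x) x := by
      intro x hx
      have hd : DifferentiableOn ℝ (iteratedDerivWithin m g (Set.Ioo a b)) (Set.Ioo a b) :=
        hg.differentiableOn_iteratedDerivWithin (by exact_mod_cast Nat.lt_succ_self m) hu
      have hdx : DifferentiableAt ℝ (iteratedDerivWithin m g (Set.Ioo a b)) x :=
        (hd x hx).differentiableAt (hs.mem_nhds hx)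
      have heq : iteratedDerivWithin m g (Set.Ioo a b) =ᶠ[nhds x] iteratedDeriv m g :=
        Filter.eventuallyEq_of_mem (hs.mem_nhds hx)
          (fun y hy => by
            rw [iteratedDerivWithin, iteratedDeriv, iteratedFDerivWithin_of_isOpen m hs hy])
      have h1 : HasDerivAt (iteratedDerivWithin m g (Set.Ioo a b))
          (derivWithin (iteratedDerivWithin m g (Set.Ioo a b)) (Set.Ioo a b) x) x := by
        have := hdx.hasDerivAt
        rwa [(hdx.derivWithin (hu x hx)).symm] at this
      have h2 := h1.congr_of_eventuallyEq heq.symm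
      have h3 : derivWithin (iteratedDerivWithin m g (Set.Ioo a b)) (Set.Ioo a b) x
          = iteratedDeriv (m+1) g x := by
        rw [← iteratedDerivWithin_succ,
          iteratedDerivWithin, iteratedDeriv, iteratedFDerivWithin_of_isOpen (m+1) hs hx]
      rwa [h3] at h2
    have hconth : ContinuousOn h (Set.Ioo a b) := fun x hx =>
      (hder x hx).differentiableAt.continuousAt.continuousWithinAt
    have hcont' : ContinuousOn (iteratedDeriv (m+1) g) (Set.Ioo a b) := by
      have := hg.continuousOn_iteratedDerivWithin (le_refl _) hu
      refine this.congr fun y hy => ?_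
      rw [iteratedDerivWithin, iteratedDeriv, iteratedFDerivWithin_of_isOpen (m+1) hs hy]
    -- sign dichotomy
    have hsign : (∀ x ∈ Set.Ioo a b, 0 < iteratedDeriv (m+1) g x) ∨
        (∀ x ∈ Set.Ioo a b, iteratedDeriv (m+1) g x < 0) := by
      by_contra hcon
      push_neg at hcon
      obtain ⟨⟨x, hx, hx0⟩, ⟨y, hy, hy0⟩⟩ := hcon
      have hne : ∀ z ∈ Set.Ioo a b, iteratedDeriv (m+1) g z ≠ 0 := by
        intro z hz h0
        have := hlb z hz
        rw [h0, abs_zero] at this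
        linarith
      have huIcc : Set.uIcc x y ⊆ Set.Ioo a b := (Set.ordConnected_Ioo).uIcc_subset hx hy
      obtain ⟨z, hz, hz0⟩ := intermediate_value_uIcc (hcont'.mono huIcc)
        (Set.mem_uIcc.mpr (Or.inl ⟨hx0, hy0⟩))
      exact hne z (huIcc hz) hz0
    have hmono : StrictMonoOn h (Set.Ioo a b) ∨ StrictAntiOn h (Set.Ioo a b) := by
      rcases hsign with hpos | hneg
      · left
        refine strictMonoOn_of_deriv_pos (convex_Ioo a b) hconth fun x hx => ?_
        rw [interior_Ioo] at hx
        rw [(hder x hx).deriv]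
        exact hpos x hx
      · right
        refine strictAntiOn_of_deriv_neg (convex_Ioo a b) hconth fun x hx => ?_
        rw [interior_Ioo] at hx
        rw [(hder x hx).deriv]
        exact hneg x hx
    -- the "piece" bound for order-convex subsets where |h| ≥ s
    have hcm : (0:ℝ) ≤ 2 ^ (m+1) - 2 := by
      have h2 : (2:ℝ)^1 ≤ 2^(m+1) := pow_le_pow_right₀ one_le_two (by omega)
      simpa using h2
    have piece : ∀ Q : Set ℝ, Q ⊆ Set.Ioo a b →
        (∀ x ∈ Q, ∀ y ∈ Q, ∀ z, x ≤ z → z ≤ y → z ∈ Q) →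
        (∀ x ∈ Q, s ≤ |iteratedDeriv m g x|) →
        volume {x ∈ Q | |g x| < eta} ≤ ENNReal.ofReal ((2 ^ (m+1) - 2) * t) := by
      intro Q hQ hconv hlbQ
      rcases Q.eq_empty_or_nonempty with hQe | hQne
      · rw [hQe]
        simp only [Set.sep_empty, measure_empty]
        positivity
      have hbdb : BddBelow Q := ⟨a, fun x hx => (hQ hx).1.le⟩
      have hbda : BddAbove Q := ⟨b, fun x hx => (hQ hx).2.le⟩
      set c' := sInf Q
      set d' := sSup Q
      have hsub : Set.Ioo c' d' ⊆ Q := by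
        intro x hx
        obtain ⟨p, hp, hpx⟩ := exists_lt_of_csInf_lt hQne hx.1
        obtain ⟨q, hq, hxq⟩ := exists_lt_of_lt_csSup hQne hx.2
        exact hconv p hp q hq x hpx.le hxq.le
      have hQIcc : Q ⊆ Set.Icc c' d' := fun x hx => ⟨csInf_le hbdb hx, le_csSup hbda hx⟩
      have hincl : {x ∈ Q | |g x| < eta} ⊆
          {x ∈ Set.Ioo c' d' | |g x| < eta} ∪ {c', d'} := by
        rintro x ⟨hxQ, hxg⟩
        rcases eq_or_lt_of_le (hQIcc hxQ).1 with he | hlt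
        · exact Or.inr (Or.inl he.symm)
        rcases eq_or_lt_of_le (hQIcc hxQ).2 with he | hlt2
        · exact Or.inr (Or.inr he)
        exact Or.inl ⟨⟨hlt, hlt2⟩, hxg⟩
      calc volume {x ∈ Q | |g x| < eta}
          ≤ volume ({x ∈ Set.Ioo c' d' | |g x| < eta} ∪ ({c', d'} : Set ℝ)) :=
            measure_mono hincl
        _ ≤ volume {x ∈ Set.Ioo c' d' | |g x| < eta} + volume ({c', d'} : Set ℝ) :=
            measure_union_le _ _
        _ ≤ ENNReal.ofReal ((2 ^ (m+1) - 2) * (eta/s) ^ ((1:ℝ)/(m:ℝ))) + 0 := by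
            refine add_le_add ?_ ?_
            · refine ih c' d' g s eta hspos heta ?_ ?_
              · exact (hg.of_le (by exact_mod_cast Nat.le_succ m)).mono (hsub.trans hQ)
              · exact fun x hx => hlbQ x (hsub hx)
            · have : volume ({c', d'} : Set ℝ) = 0 :=
                Set.Finite.measure_zero (Set.toFinite _) volume
              rw [this]
        _ = ENNReal.ofReal ((2 ^ (m+1) - 2) * t) := by
            rw [add_zero]
            congr 1
            rw [hetast]
    -- decompose
    set P : Set ℝ := {x ∈ Set.Ioo a b | s ≤ h x} with hPdef
    set N : Set ℝ := {x ∈ Set.Ioo a b | h x ≤ -s} with hNdef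
    have hPsub : P ⊆ Set.Ioo a b := fun x hx => hx.1
    have hNsub : N ⊆ Set.Ioo a b := fun x hx => hx.1
    have hPconv : ∀ x ∈ P, ∀ y ∈ P, ∀ z, x ≤ z → z ≤ y → z ∈ P := by
      rintro x ⟨hx, hxs⟩ y ⟨hy, hys⟩ z hxz hzy
      have hz : z ∈ Set.Ioo a b := ⟨lt_of_lt_of_le hx.1 hxz, lt_of_le_of_lt hzy hy.2⟩
      refine ⟨hz, ?_⟩
      rcases hmono with hmo | han
      · exact le_trans hxs (hmo.monotoneOn hx hz hxz)
      · exact le_trans hys (han.antitoneOn hz hy hzy)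
    have hNconv : ∀ x ∈ N, ∀ y ∈ N, ∀ z, x ≤ z → z ≤ y → z ∈ N := by
      rintro x ⟨hx, hxs⟩ y ⟨hy, hys⟩ z hxz hzy
      have hz : z ∈ Set.Ioo a b := ⟨lt_of_lt_of_le hx.1 hxz, lt_of_le_of_lt hzy hy.2⟩
      refine ⟨hz, ?_⟩
      rcases hmono with hmo | han
      · exact le_trans (hmo.monotoneOn hz hy hzy) hys
      · exact le_trans (han.antitoneOn hx hz hxz) hxs
    have hPlb : ∀ x ∈ P, s ≤ |iteratedDeriv m g x| := by
      rintro x ⟨hx, hxs⟩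
      rw [abs_of_pos (lt_of_lt_of_le hspos hxs)]
      exact hxs
    have hNlb : ∀ x ∈ N, s ≤ |iteratedDeriv m g x| := by
      rintro x ⟨hx, hxs⟩
      rw [abs_of_neg (by linarith)]
      linarith
    have hdecomp : {x ∈ Set.Ioo a b | |g x| < eta} ⊆
        {x ∈ Set.Ioo a b | |h x| < s} ∪ ({x ∈ P | |g x| < eta} ∪ {x ∈ N | |g x| < eta}) := by
      rintro x ⟨hx, hxg⟩
      rcases lt_or_ge (|h x|) s with hlt | hge
      · exact Or.inl ⟨hx, hlt⟩
      rcases le_or_gt 0 (h x) with hp | hn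
      · refine Or.inr (Or.inl ⟨⟨hx, ?_⟩, hxg⟩)
        rwa [abs_of_nonneg hp] at hge
      · refine Or.inr (Or.inr ⟨⟨hx, ?_⟩, hxg⟩)
        rw [abs_of_neg hn] at hge
        linarith
    have hA : volume {x ∈ Set.Ioo a b | |h x| < s} ≤ ENNReal.ofReal (2 * t) := by
      have := my_mvt_bound a b h (iteratedDeriv (m+1) g) lam s hlam hder hlb
      have heq : 2 * (s / lam) = 2 * t := by
        rw [hsdef, mul_div_cancel_left₀ _ (ne_of_gt hlam)]
      rwa [heq] at this
    calc volume {x ∈ Set.Ioo a b | |g x| < eta}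
        ≤ volume ({x ∈ Set.Ioo a b | |h x| < s} ∪
            ({x ∈ P | |g x| < eta} ∪ {x ∈ N | |g x| < eta})) := measure_mono hdecomp
      _ ≤ volume {x ∈ Set.Ioo a b | |h x| < s} +
            (volume {x ∈ P | |g x| < eta} + volume {x ∈ N | |g x| < eta}) :=
          le_trans (measure_union_le _ _) (add_le_add le_rfl (measure_union_le _ _))
      _ ≤ ENNReal.ofReal (2 * t) +
            (ENNReal.ofReal ((2 ^ (m+1) - 2) * t) + ENNReal.ofReal ((2 ^ (m+1) - 2) * t)) :=
          add_le_add hA (add_le_add (piece P hPsub hPconv hPlb) (piece N hNsub hNconv hNlb))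
      _ = ENNReal.ofReal (2 * t + ((2 ^ (m+1) - 2) * t + (2 ^ (m+1) - 2) * t)) := by
          rw [ENNReal.ofReal_add (by positivity) (by positivity),
            ENNReal.ofReal_add (by positivity) (by positivity)]
      _ ≤ ENNReal.ofReal ((2 ^ (m+1+1) - 2) * (eta / lam) ^ ((1:ℝ)/((m+1:ℕ):ℝ))) := by
          refine ENNReal.ofReal_le_ofReal ?_
          have : (eta / lam) ^ ((1:ℝ)/((m+1:ℕ):ℝ)) = t := by
            rw [htdef]; push_cast; ring_nf
          rw [this]
          ring_nf
          nlinarith [ht.le]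

theorem sublevel_measure_bound (j : ℕ) (hj : 1 ≤ j) (M L : ℝ) :
    ∃ C : ℝ, 0 < C ∧
      ∀ (a b : ℝ) (f : ℝ → ℝ) (δ : ℝ), 0 < δ → b - a ≤ L →
        ContDiffOn ℝ j f (Set.Ioo a b) →
        (∀ i ≤ j, ∀ x ∈ Set.Ioo a b,
          |iteratedDerivWithin i f (Set.Ioo a b) x| ≤ M) →
        (∀ x ∈ Set.Ioo a b, δ ≤ |iteratedDerivWithin j f (Set.Ioo a b) x|) →
        ∀ ε > 0,
          volume {x ∈ Set.Ioo a b | |f x| < ε} ≤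
            ENNReal.ofReal (C * (ε / δ) ^ ((1 : ℝ) / j)) := by
  refine ⟨2 ^ (j+1), by positivity, ?_⟩
  intro a b f δ hδ hL hf hM hlb ε hε
  have hlb' : ∀ x ∈ Set.Ioo a b, δ ≤ |iteratedDeriv j f x| := by
    intro x hx
    rw [← myIteratedDerivWithin_isOpen j isOpen_Ioo hx]
    exact hlb x hx
  refine (my_key j hj a b f δ ε hδ hε hf hlb').trans (ENNReal.ofReal_le_ofReal ?_)
  have hr : (0:ℝ) ≤ (ε / δ) ^ ((1:ℝ)/(j:ℝ)) := Real.rpow_nonneg (by positivity) _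
  nlinarith [hr]
end

section
/- Let A ⊂ Z^d be a strongly admissible set, meaning A is admissible (pairwise distinct norms) and for all distinct a,b ∈ A, the set {x ∈ Z^d : |x| = |a| and |x − (a+b)| = |a − (a+b)|} has at most 2 elements. Suppose a, b ∈ Λ_f with |a| = |b|, a ≠ b, and suppose a', b' ∈ Λ_f satisfy (a,a') ∈ (Λ_f × Λ_f)_+ and (b,b') ∈ (Λ_f × Λ_f)_+. Then |a'| ≠ |b'|. -/
lemma znorm_eq_iff {d : ℕ} (a b : Fin d → ℤ) :
    znorm a = znorm b ↔ (∑ i, (a i) ^ 2) = ∑ i, (b i) ^ 2 := by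
  unfold znorm
  rw [Real.sqrt_inj (by positivity) (by positivity)]
  constructor
  · intro h; exact_mod_cast h
  · intro h; exact_mod_cast h

lemma finite_sphere {d : ℕ} (N : ℤ) :
    {x : Fin d → ℤ | (∑ i, (x i) ^ 2) = N}.Finite := by
  apply Set.Finite.subset (Set.Finite.pi (fun i : Fin d => Set.finite_Icc (-N) N))
  intro x hx
  simp only [Set.mem_setOf_eq] at hx
  simp only [Set.mem_pi, Set.mem_univ, Set.mem_Icc, forall_true_left]
  intro i
  have h1 : (x i) ^ 2 ≤ N := by
    rw [← hx]
    exact Finset.single_le_sum (fun j _ => sq_nonneg (x j)) (Finset.mem_univ i)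
  have h2 : |x i| ≤ |x i| ^ 2 := by
    rcases eq_or_ne (x i) 0 with h | h
    · simp [h]
    · have : 1 ≤ |x i| := Int.one_le_abs h
      nlinarith
  have h3 : |x i| ≤ N := by
    calc |x i| ≤ |x i| ^ 2 := h2
    _ = (x i) ^ 2 := sq_abs _
    _ ≤ N := h1
  constructor
  · linarith [neg_abs_le (x i)]
  · linarith [le_abs_self (x i)]

/-- Lemma on strongly admissible sets: if `a, b ∈ Λ_f` with `|a| = |b|`, `a ≠ b`,
and `(a,a'), (b,b') ∈ (Λ_f × Λ_f)_+` (the `ℓ`-values being encoded by elements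
`la, lb, la', lb'` of `A` with matching norms), then `|a'| ≠ |b'|`. -/
theorem strongly_admissible_plus_lemma {d : ℕ} (A : Finset (Fin d → ℤ))
    (hadm : ∀ a ∈ A, ∀ b ∈ A, a ≠ b → znorm a ≠ znorm b)
    (hstrong : ∀ a ∈ A, ∀ b ∈ A, a ≠ b →
      Set.ncard {x : Fin d → ℤ |
        znorm x = znorm a ∧ znorm (x - (a + b)) = znorm (a - (a + b))} ≤ 2)
    (a b a' b' la lb la' lb' : Fin d → ℤ)
    (haA : a ∉ A) (hbA : b ∉ A) (ha'A : a' ∉ A) (hb'A : b' ∉ A)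
    (hla : la ∈ A) (hlb : lb ∈ A) (hla' : la' ∈ A) (hlb' : lb' ∈ A)
    (hn1 : znorm la = znorm a) (hn2 : znorm lb = znorm b)
    (hn3 : znorm la' = znorm a') (hn4 : znorm lb' = znorm b')
    (hab : znorm a = znorm b) (hne : a ≠ b)
    (hp1 : la + la' = a + a') (hp2 : lb + lb' = b + b') :
    znorm a' ≠ znorm b' := by
  intro h
  -- la = lb
  have heq : la = lb := by
    by_contra hc
    exact hadm la hla lb hlb hc (hn1.trans (hab.trans hn2.symm))
  -- la' = lb'
  have heq' : la' = lb' := by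
    by_contra hc
    exact hadm la' hla' lb' hlb' hc (hn3.trans (h.trans hn4.symm))
  rcases eq_or_ne la la' with hαβ | hαβ
  · -- Case α = β : forces a = la ∈ A, contradiction
    have ha' : a' = la + la' - a := by rw [hp1]; ring
    have e1 : (∑ i, (a' i) ^ 2) = ∑ i, (a i) ^ 2 := by
      rw [← znorm_eq_iff]
      calc znorm a' = znorm la' := hn3.symm
      _ = znorm la := by rw [hαβ]
      _ = znorm a := hn1
    have e2 : (∑ i, (a i) ^ 2) = ∑ i, (la i) ^ 2 :=
      ((znorm_eq_iff la a).mp hn1).symm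
    have e1' : (∑ i, (la i + la i - a i) ^ 2) = ∑ i, (a i) ^ 2 := by
      rw [← e1]
      apply Finset.sum_congr rfl
      intro i _
      rw [ha']
      simp [hαβ]
    have hsum : (∑ i, (a i - la i) ^ 2) = 0 := by
      have h0 : ∀ i ∈ Finset.univ, (2 : ℤ) * (a i - la i) ^ 2 =
          ((la i + la i - a i) ^ 2 + (a i) ^ 2) - 2 * (la i) ^ 2 :=
        fun i _ => by ring
      have hsc := Finset.sum_congr rfl h0
      rw [Finset.sum_sub_distrib, Finset.sum_add_distrib,
        ← Finset.mul_sum, ← Finset.mul_sum] at hsc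
      linarith [e1', e2]
    have hzero : ∀ i, a i - la i = 0 := by
      intro i
      have := (Finset.sum_eq_zero_iff_of_nonneg
        (fun j _ => sq_nonneg (a j - la j))).mp hsum i (Finset.mem_univ i)
      exact pow_eq_zero_iff (by norm_num) |>.mp this
    have : a = la := by
      funext i
      have := hzero i
      omega
    exact haA (this ▸ hla)
  · -- Case α ≠ β : three distinct points on the intersection of spheres
    have hcard := hstrong la hla la' hla' hαβ
    set S := {x : Fin d → ℤ |
      znorm x = znorm la ∧ znorm (x - (la + la')) = znorm (la - (la + la'))} with hS
    have hlaS : la ∈ S := ⟨rfl, rfl⟩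
    have hlm : la - (la + la') = -la' := by ring
    have haS : a ∈ S := by
      refine ⟨hn1.symm, ?_⟩
      have h1 : a - (la + la') = -a' := by rw [hp1]; ring
      rw [h1, hlm, znorm_neg, znorm_neg]
      exact hn3.symm
    have hbS : b ∈ S := by
      refine ⟨(hn1.trans hab).symm, ?_⟩
      have h1 : b - (la + la') = -b' := by rw [heq, heq', hp2]; ring
      rw [h1, hlm, znorm_neg, znorm_neg, heq']
      exact hn4.symm
    have hSfin : S.Finite := by
      apply (finite_sphere (∑ i, (la i) ^ 2)).subset
      intro x hx
      exact (znorm_eq_iff x la).mp hx.1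
    have hsub : ({la, a, b} : Set (Fin d → ℤ)) ⊆ S := by
      intro x hx
      rcases hx with h | h | h
      · exact h ▸ hlaS
      · exact h ▸ haS
      · exact h ▸ hbS
    have hcard3 : ({la, a, b} : Set (Fin d → ℤ)).ncard = 3 := by
      rw [Set.ncard_insert_of_notMem, Set.ncard_pair hne]
      simp only [Set.mem_insert_iff, Set.mem_singleton_iff]
      push_neg
      exact ⟨fun hh => haA (hh ▸ hla), fun hh => hbA (hh ▸ hla)⟩
    have := Set.ncard_le_ncard hsub hSfin
    rw [hcard3] at this
    omega
end
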